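/- Let η_0 be a probability measure on a space U, let G_0,...,G_{n-1}: U → (0,∞) be bounded measurable potentials, and let M_1,...,M_n be Markov kernels on U. Define the unnormalized Feynman-Kac measure γ_n(φ) = E[φ(X_n) Π_{p=0}^{n-1} G_p(X_p)] where X_0 ~ η_0 and X_p ~ M_p(X_{p-1},·). Let η_p^N be the empirical measures produced by a particle filter with N particles (sampling, weighting by G_p, multinomial resampling according to normalized weights, and mutation by M_{p+1}). Then the estimator (Π_{p=0}^{n-1} η_p^N(G_p)) · η_n^N(φ) is an unbiased estimator of γ_n(φ); in particular Π_{p=0}^{n-1} η_p^N(G_p) is unbiased for the normalizing constant γ_n(1). -/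

import Mathlib

open MeasureTheory ProbabilityTheory Finset
open scoped ENNReal NNReal

private lemma aux_integrable {α : Type*} [MeasurableSpace α] (μ : Measure α) [IsFiniteMeasure μ]
    {f : α → ℝ} (hf : AEStronglyMeasurable f μ) {b : ℝ} (hb : ∀ x, |f x| ≤ b) :
    Integrable f μ :=
  (integrable_const b).mono' hf (ae_of_all _ fun x => by simpa [Real.norm_eq_abs] using hb x)

private lemma aux_mass {α β : Type*} [MeasurableSpace α] [MeasurableSpace β]
    (μ : Measure α) (κ : Kernel α β) [IsMarkovKernel κ] :
    μ.bind (fun a => κ a) Set.univ = μ Set.univ := by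
  rw [Measure.bind_apply MeasurableSet.univ (Kernel.measurable κ).aemeasurable]
  simp

private lemma integral_bind_nonneg {α β : Type*} [MeasurableSpace α] [MeasurableSpace β]
    (μ : Measure α) [IsFiniteMeasure μ] (κ : Kernel α β) [IsMarkovKernel κ]
    {f : β → ℝ} (hf : Measurable f) {b : ℝ} (hb : ∀ x, |f x| ≤ b) (h0 : ∀ x, 0 ≤ f x) :
    ∫ x, f x ∂(μ.bind fun a => κ a) = ∫ a, ∫ x, f x ∂(κ a) ∂μ := by
  have hmeas : Measurable fun x => ENNReal.ofReal (f x) := hf.ennreal_ofReal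
  have hL : Measurable fun a => ∫⁻ x, ENNReal.ofReal (f x) ∂(κ a) :=
    (Measure.measurable_lintegral hmeas).comp (Kernel.measurable κ)
  have hLle : ∀ a, (∫⁻ x, ENNReal.ofReal (f x) ∂(κ a)) ≤ ENNReal.ofReal b := by
    intro a
    calc ∫⁻ x, ENNReal.ofReal (f x) ∂(κ a) ≤ ∫⁻ _, ENNReal.ofReal b ∂(κ a) :=
          lintegral_mono fun x => ENNReal.ofReal_le_ofReal ((le_abs_self _).trans (hb x))
      _ = ENNReal.ofReal b := by simp
  rw [integral_eq_lintegral_of_nonneg_ae (ae_of_all _ h0) hf.aestronglyMeasurable,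
    Measure.lintegral_bind (Kernel.measurable κ).aemeasurable hmeas.aemeasurable,
    ← integral_toReal hL.aemeasurable
      (ae_of_all _ fun a => lt_of_le_of_lt (hLle a) ENNReal.ofReal_lt_top)]
  refine integral_congr_ae (ae_of_all _ fun a => ?_)
  exact (integral_eq_lintegral_of_nonneg_ae (ae_of_all _ h0) hf.aestronglyMeasurable).symm

private lemma integral_bind_bdd {α β : Type*} [MeasurableSpace α] [MeasurableSpace β]
    (μ : Measure α) [IsFiniteMeasure μ] (κ : Kernel α β) [IsMarkovKernel κ]
    {f : β → ℝ} (hf : Measurable f) {b : ℝ} (hb : ∀ x, |f x| ≤ b) :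
    ∫ x, f x ∂(μ.bind fun a => κ a) = ∫ a, ∫ x, f x ∂(κ a) ∂μ := by
  haveI : IsFiniteMeasure (μ.bind fun a => κ a) :=
    ⟨by rw [aux_mass]; exact measure_lt_top μ _⟩
  set C := max b 0 with hC
  have hC0 : 0 ≤ C := le_max_right _ _
  have hbC : ∀ x, |f x| ≤ C := fun x => (hb x).trans (le_max_left _ _)
  have hg0 : ∀ x, 0 ≤ f x + C := fun x => by have := abs_le.mp (hbC x); linarith [this.1]
  have hgb : ∀ x, |f x + C| ≤ C + C := fun x => by
    have := abs_le.mp (hbC x); rw [abs_of_nonneg (hg0 x)]; linarith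
  have hI : StronglyMeasurable fun a => ∫ x, f x ∂(κ a) :=
    MeasureTheory.StronglyMeasurable.integral_kernel_prod_right (κ := κ) (f := fun _ x => f x)
      (hf.stronglyMeasurable.comp_measurable measurable_snd)
  have hIb : ∀ a, |∫ x, f x ∂(κ a)| ≤ C := fun a => by
    have := norm_integral_le_of_norm_le_const (μ := κ a) (f := f) (C := C)
      (ae_of_all _ fun x => by simpa [Real.norm_eq_abs] using hbC x)
    simpa [Real.norm_eq_abs, measure_univ] using this
  have key := integral_bind_nonneg μ κ (hf.add_const C) hgb hg0
  rw [integral_add (aux_integrable _ hf.aestronglyMeasurable hbC) (integrable_const C)] at key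
  have hinner : (fun a => ∫ x, (f x + C) ∂(κ a)) = fun a => (∫ x, f x ∂(κ a)) + C := by
    funext a
    rw [integral_add (aux_integrable _ hf.aestronglyMeasurable hbC) (integrable_const C),
      integral_const]
    simp
  rw [hinner] at key
  rw [integral_add (aux_integrable μ hI.aestronglyMeasurable hIb) (integrable_const C)] at key
  have hmass : (μ.bind fun a => κ a) Set.univ = μ Set.univ := aux_mass μ κ
  simp only [integral_const, smul_eq_mul, measureReal_def, hmass] at key
  linarith [key]

private lemma integral_withDensity_ofReal {α : Type*} [MeasurableSpace α] (μ : Measure α)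
    {g : α → ℝ} (hg : Measurable g) (h0 : ∀ x, 0 ≤ g x) (h : α → ℝ) :
    ∫ x, h x ∂(μ.withDensity fun x => ENNReal.ofReal (g x)) = ∫ x, g x * h x ∂μ := by
  have heq : (fun x => ENNReal.ofReal (g x)) = fun x => ((g x).toNNReal : ℝ≥0∞) := rfl
  rw [heq, integral_withDensity_eq_integral_smul hg.real_toNNReal h]
  refine integral_congr_ae (ae_of_all _ fun x => ?_)
  simp [NNReal.smul_def, Real.coe_toNNReal _ (h0 x)]

theorem stmt6 (U : Type*) [MeasurableSpace U]
    (η₀ : Measure U) [IsProbabilityMeasure η₀]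
    (G : ℕ → U → ℝ) (hGmeas : ∀ p, Measurable (G p))
    (B : ℝ) (hG : ∀ p x, 0 < G p x ∧ G p x ≤ B)
    (M : ℕ → ProbabilityTheory.Kernel U U) (hM : ∀ p, IsMarkovKernel (M p))
    -- the particle system
    (Ω : Type*) [MeasurableSpace Ω] (P : Measure Ω) [IsProbabilityMeasure P]
    (N : ℕ) (hN : 0 < N)
    (X : ℕ → Fin N → Ω → U)
    (F : ℕ → MeasurableSpace Ω)
    (hFle : ∀ n, F n ≤ ‹MeasurableSpace Ω›) (hFmono : ∀ n, F n ≤ F (n + 1))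
    (hXmeas : ∀ n i, Measurable[F n] (X n i))
    -- initial particles are distributed according to η₀
    (hX0 : ∀ i, Measure.map (X 0 i) P = η₀)
    -- conditional sampling from the Bayes update Φ_{n+1}(η_n^N)
    (hsamp : ∀ (n : ℕ) (ψ : U → ℝ), Measurable ψ → (∃ b, ∀ x, |ψ x| ≤ b) →
      P[fun ω => (N : ℝ)⁻¹ * ∑ i, ψ (X (n + 1) i ω) | F n]
        =ᵐ[P] fun ω =>
          (∑ i, G n (X n i ω) * ∫ x, ψ x ∂(M (n + 1) (X n i ω)))
            / ∑ i, G n (X n i ω)) :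
    -- the unnormalized Feynman–Kac measures
    let γ : ℕ → Measure U := fun n =>
      Nat.rec η₀
        (fun p γp =>
          (γp.withDensity (fun x => ENNReal.ofReal (G p x))).bind (fun x => M (p + 1) x)) n
    ∀ (n : ℕ) (φ : U → ℝ), Measurable φ → (∃ b, ∀ x, |φ x| ≤ b) →
      (∫ ω, (∏ p ∈ Finset.range n, ((N : ℝ)⁻¹ * ∑ i, G p (X p i ω)))
          * ((N : ℝ)⁻¹ * ∑ i, φ (X n i ω)) ∂P = ∫ x, φ x ∂(γ n)) ∧
      ∫ ω, (∏ p ∈ Finset.range n, ((N : ℝ)⁻¹ * ∑ i, G p (X p i ω))) ∂P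
        = (γ n Set.univ).toReal := by
  intro γ
  haveI : IsFiniteMeasure P := inferInstance
  have hγ0 : γ 0 = η₀ := rfl
  have hγsucc : ∀ p, γ (p + 1)
      = ((γ p).withDensity fun x => ENNReal.ofReal (G p x)).bind (fun x => M (p + 1) x) :=
    fun p => rfl
  clear_value γ
  have hU : Nonempty U := by
    by_contra hc
    rw [not_nonempty_iff] at hc
    have h1 : η₀ Set.univ = 1 := measure_univ
    rw [Set.univ_eq_empty_iff.mpr hc, measure_empty] at h1
    exact zero_ne_one h1
  have hB : 0 < B := lt_of_lt_of_le (hG 0 hU.some).1 (hG 0 hU.some).2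
  have hNe : (N : ℝ) ≠ 0 := Nat.cast_ne_zero.mpr hN.ne'
  haveI : Nonempty (Fin N) := ⟨⟨0, hN⟩⟩
  have hγfin : ∀ n, IsFiniteMeasure (γ n) := by
    intro n
    induction n with
    | zero => rw [hγ0]; infer_instance
    | succ p ih =>
      haveI := ih
      haveI := hM (p + 1)
      haveI : IsFiniteMeasure ((γ p).withDensity fun x => ENNReal.ofReal (G p x)) := by
        constructor
        rw [withDensity_apply _ MeasurableSet.univ, setLIntegral_univ]
        calc ∫⁻ x, ENNReal.ofReal (G p x) ∂(γ p)
            ≤ ∫⁻ _, ENNReal.ofReal B ∂(γ p) :=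
              lintegral_mono fun x => ENNReal.ofReal_le_ofReal (hG p x).2
          _ = ENNReal.ofReal B * (γ p) Set.univ := lintegral_const _
          _ < ⊤ := ENNReal.mul_lt_top ENNReal.ofReal_lt_top (measure_lt_top _ _)
      rw [hγsucc]
      exact ⟨by rw [aux_mass]; exact measure_lt_top _ _⟩
  have hFmono' : ∀ {p q : ℕ}, p ≤ q → F p ≤ F q := fun h => monotone_nat_of_le_succ hFmono h
  have hXm : ∀ p i, Measurable (X p i) := fun p i => (hXmeas p i).mono (hFle p) le_rfl
  have hfac : ∀ p ω, 0 < ∑ i, G p (X p i ω) :=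
    fun p ω => Finset.sum_pos (fun i _ => (hG p _).1) Finset.univ_nonempty
  have hfacB : ∀ p ω, (N : ℝ)⁻¹ * ∑ i, G p (X p i ω) ≤ B := by
    intro p ω
    have h1 : ∑ i, G p (X p i ω) ≤ (N : ℝ) * B := by
      calc ∑ i, G p (X p i ω) ≤ ∑ _i : Fin N, B := Finset.sum_le_sum fun i _ => (hG p _).2
        _ = (N : ℝ) * B := by simp [Finset.sum_const, Finset.card_univ, nsmul_eq_mul]
    calc (N : ℝ)⁻¹ * ∑ i, G p (X p i ω) ≤ (N : ℝ)⁻¹ * ((N : ℝ) * B) :=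
          mul_le_mul_of_nonneg_left h1 (by positivity)
      _ = B := by field_simp
  have hZbound : ∀ n ω, 0 ≤ (∏ p ∈ range n, ((N : ℝ)⁻¹ * ∑ i, G p (X p i ω)))
      ∧ (∏ p ∈ range n, ((N : ℝ)⁻¹ * ∑ i, G p (X p i ω))) ≤ B ^ n := by
    intro n ω
    induction n with
    | zero => simp
    | succ m ih =>
      rw [Finset.prod_range_succ, pow_succ]
      have h1 : 0 ≤ (N : ℝ)⁻¹ * ∑ i, G m (X m i ω) :=
        le_of_lt (mul_pos (by positivity) (hfac m ω))
      exact ⟨mul_nonneg ih.1 h1, mul_le_mul ih.2 (hfacB m ω) h1 (pow_nonneg hB.le m)⟩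
  have hprodF : ∀ (k n : ℕ), k ≤ n + 1 →
      Measurable[F n] (fun ω => ∏ p ∈ range k, ((N : ℝ)⁻¹ * ∑ i, G p (X p i ω))) := by
    intro k n hk
    refine Finset.measurable_prod _ fun p hp => ?_
    have hpn : p ≤ n := Nat.lt_succ_iff.mp (lt_of_lt_of_le (Finset.mem_range.mp hp) hk)
    exact measurable_const.mul (Finset.measurable_sum _ fun i _ =>
      (hGmeas p).comp ((hXmeas p i).mono (hFmono' hpn) le_rfl))
  have key : ∀ n (φ : U → ℝ), Measurable φ → ∀ b : ℝ, (∀ x, |φ x| ≤ b) →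
      ∫ ω, (∏ p ∈ range n, ((N : ℝ)⁻¹ * ∑ i, G p (X p i ω)))
        * ((N : ℝ)⁻¹ * ∑ i, φ (X n i ω)) ∂P = ∫ x, φ x ∂(γ n) := by
    intro n
    induction n with
    | zero =>
      intro φ hφ b hb
      simp only [Finset.range_zero, Finset.prod_empty, one_mul]
      rw [integral_const_mul]
      have hsum : ∫ ω, ∑ i : Fin N, φ (X 0 i ω) ∂P
          = ∑ i : Fin N, ∫ ω, φ (X 0 i ω) ∂P := by
        apply integral_finset_sum
        intro i _
        haveI : IsFiniteMeasure P := inferInstance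
        refine aux_integrable P ?_ (fun ω => hb (X 0 i ω))
        exact (hφ.comp (hXm 0 i)).aestronglyMeasurable
      rw [hsum]
      have heach : ∀ i : Fin N, ∫ ω, φ (X 0 i ω) ∂P = ∫ x, φ x ∂η₀ := fun i => by
        rw [← hX0 i, integral_map (hXm 0 i).aemeasurable hφ.aestronglyMeasurable]
      simp only [heach, Finset.sum_const, Finset.card_univ, Fintype.card_fin, nsmul_eq_mul]
      rw [hγ0, ← mul_assoc, inv_mul_cancel₀ hNe, one_mul]
    | succ n IH =>
      intro φ hφ b hb
      haveI := hM (n + 1)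
      haveI := hγfin n
      haveI : IsFiniteMeasure ((γ n).withDensity fun x => ENNReal.ofReal (G n x)) := by
        constructor
        rw [withDensity_apply _ MeasurableSet.univ, setLIntegral_univ]
        calc ∫⁻ x, ENNReal.ofReal (G n x) ∂(γ n)
            ≤ ∫⁻ _, ENNReal.ofReal B ∂(γ n) :=
              lintegral_mono fun x => ENNReal.ofReal_le_ofReal (hG n x).2
          _ = ENNReal.ofReal B * (γ n) Set.univ := lintegral_const _
          _ < ⊤ := ENNReal.mul_lt_top ENNReal.ofReal_lt_top (measure_lt_top _ _)
      have hb0 : 0 ≤ b := le_trans (abs_nonneg _) (hb hU.some)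
      -- the integral against the kernel
      have hIφm : Measurable fun x => ∫ u, φ u ∂(M (n + 1) x) :=
        (MeasureTheory.StronglyMeasurable.integral_kernel_prod_right (κ := M (n + 1))
          (f := fun _ u => φ u)
          (hφ.stronglyMeasurable.comp_measurable measurable_snd)).measurable
      have hIφb : ∀ x, |∫ u, φ u ∂(M (n + 1) x)| ≤ b := fun x => by
        have := norm_integral_le_of_norm_le_const (μ := M (n + 1) x) (f := φ) (C := b)
          (ae_of_all _ fun u => by simpa [Real.norm_eq_abs] using hb u)
        simpa [Real.norm_eq_abs, measure_univ] using this
      have hψm : Measurable fun x => G n x * ∫ u, φ u ∂(M (n + 1) x) := (hGmeas n).mul hIφm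
      have hψb : ∀ x, |G n x * ∫ u, φ u ∂(M (n + 1) x)| ≤ B * b := fun x => by
        calc |G n x * ∫ u, φ u ∂(M (n + 1) x)|
            = |G n x| * |∫ u, φ u ∂(M (n + 1) x)| := abs_mul _ _
          _ ≤ B * b := mul_le_mul (by rw [abs_of_pos (hG n x).1]; exact (hG n x).2)
              (hIφb x) (abs_nonneg _) hB.le
      -- measurability / integrability of the factors
      have hWm : Measurable[F n]
          (fun ω => ∏ p ∈ range (n + 1), ((N : ℝ)⁻¹ * ∑ i, G p (X p i ω))) :=
        hprodF (n + 1) n le_rfl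
      have hhm : Measurable (fun ω => (N : ℝ)⁻¹ * ∑ i, φ (X (n + 1) i ω)) :=
        measurable_const.mul (Finset.measurable_sum _ fun i _ => hφ.comp (hXm (n + 1) i))
      have hhb : ∀ ω, |(N : ℝ)⁻¹ * ∑ i, φ (X (n + 1) i ω)| ≤ b := by
        intro ω
        have h1 : |∑ i, φ (X (n + 1) i ω)| ≤ (N : ℝ) * b := by
          calc |∑ i, φ (X (n + 1) i ω)| ≤ ∑ i, |φ (X (n + 1) i ω)| :=
                Finset.abs_sum_le_sum_abs _ _
            _ ≤ ∑ _i : Fin N, b := Finset.sum_le_sum fun i _ => hb _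
            _ = (N : ℝ) * b := by simp [Finset.sum_const, Finset.card_univ, nsmul_eq_mul]
        calc |(N : ℝ)⁻¹ * ∑ i, φ (X (n + 1) i ω)|
            = (N : ℝ)⁻¹ * |∑ i, φ (X (n + 1) i ω)| := by
              rw [abs_mul, abs_of_nonneg (by positivity : (0:ℝ) ≤ (N : ℝ)⁻¹)]
          _ ≤ (N : ℝ)⁻¹ * ((N : ℝ) * b) := mul_le_mul_of_nonneg_left h1 (by positivity)
          _ = b := by field_simp
      have hint_h : Integrable (fun ω => (N : ℝ)⁻¹ * ∑ i, φ (X (n + 1) i ω)) P :=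
        aux_integrable P hhm.aestronglyMeasurable hhb
      have hWhb : ∀ ω, |(∏ p ∈ range (n + 1), ((N : ℝ)⁻¹ * ∑ i, G p (X p i ω)))
          * ((N : ℝ)⁻¹ * ∑ i, φ (X (n + 1) i ω))| ≤ B ^ (n + 1) * b := by
        intro ω
        rw [abs_mul]
        exact mul_le_mul
          (by rw [abs_of_nonneg (hZbound (n + 1) ω).1]; exact (hZbound (n + 1) ω).2)
          (hhb ω) (abs_nonneg _) (pow_nonneg hB.le _)
      have hWh_int : Integrable (fun ω =>
          (∏ p ∈ range (n + 1), ((N : ℝ)⁻¹ * ∑ i, G p (X p i ω)))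
            * ((N : ℝ)⁻¹ * ∑ i, φ (X (n + 1) i ω))) P :=
        aux_integrable P (((hWm.mono (hFle n) le_rfl).mul hhm).aestronglyMeasurable) hWhb
      have hpull := condExp_stronglyMeasurable_mul_of_bound (hFle n)
        (hWm.stronglyMeasurable) hint_h (B ^ (n + 1))
        (ae_of_all _ fun ω => by
          rw [Real.norm_eq_abs, abs_of_nonneg (hZbound (n + 1) ω).1]
          exact (hZbound (n + 1) ω).2)
      calc ∫ ω, (∏ p ∈ range (n + 1), ((N : ℝ)⁻¹ * ∑ i, G p (X p i ω)))
              * ((N : ℝ)⁻¹ * ∑ i, φ (X (n + 1) i ω)) ∂P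
          = ∫ ω, (P[fun ω => (∏ p ∈ range (n + 1), ((N : ℝ)⁻¹ * ∑ i, G p (X p i ω)))
              * ((N : ℝ)⁻¹ * ∑ i, φ (X (n + 1) i ω)) | F n]) ω ∂P :=
            (integral_condExp (hFle n)).symm
        _ = ∫ ω, ((fun ω => ∏ p ∈ range (n + 1), ((N : ℝ)⁻¹ * ∑ i, G p (X p i ω)))
              * P[fun ω => (N : ℝ)⁻¹ * ∑ i, φ (X (n + 1) i ω) | F n]) ω ∂P :=
            integral_congr_ae hpull
        _ = ∫ ω, (∏ p ∈ range n, ((N : ℝ)⁻¹ * ∑ i, G p (X p i ω)))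
              * ((N : ℝ)⁻¹ * ∑ i, G n (X n i ω) * ∫ u, φ u ∂(M (n + 1) (X n i ω))) ∂P := by
            refine integral_congr_ae ?_
            filter_upwards [hsamp n φ hφ ⟨b, hb⟩] with ω hω
            simp only [Pi.mul_apply]
            rw [hω, Finset.prod_range_succ]
            have hS := (hfac n ω).ne'
            field_simp
        _ = ∫ x, G n x * ∫ u, φ u ∂(M (n + 1) x) ∂(γ n) :=
            IH (fun x => G n x * ∫ u, φ u ∂(M (n + 1) x)) hψm (B * b) hψb
        _ = ∫ x, φ x ∂(γ (n + 1)) := by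
            have hstep : ∫ x, φ x ∂(γ (n + 1))
                = ∫ x, G n x * ∫ u, φ u ∂(M (n + 1) x) ∂(γ n) := by
              rw [hγsucc n, integral_bind_bdd _ (M (n + 1)) hφ hb,
                integral_withDensity_ofReal (γ n) (hGmeas n) (fun x => (hG n x).1.le)]
            rw [hstep]
  intro n φ hφ hb
  obtain ⟨b, hb⟩ := hb
  refine ⟨key n φ hφ b hb, ?_⟩
  have h1 := key n (fun _ => 1) measurable_const 1 (fun x => by norm_num)
  simp only [Finset.sum_const, Finset.card_univ, Fintype.card_fin, nsmul_eq_mul, mul_one,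
    inv_mul_cancel₀ hNe, integral_const, measure_univ, smul_eq_mul, one_mul] at h1
  simpa [measureReal_def] using h1
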